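/- arXiv:2305.17482 — 3 statements merged into one kernel-verified Lean document; each statement's English description precedes it below -/
import Mathlib

section
/- Let R ∈ ℝ^{b×n} be an AMS sketch matrix and h ∈ ℝⁿ a fixed vector. Then for every coordinate i, E[((RᵀRh)_i)²] ≤ h_i² + ‖h‖₂²/b. -/
open MeasureTheory ProbabilityTheory Real Matrix

section AmsAux

variable {Ω : Type*} [MeasurableSpace Ω] {μ : Measure Ω} [IsProbabilityMeasure μ]

lemma ams_integrable_of_bounded {f : Ω → ℝ} (hf : Measurable f) (C : ℝ)
    (hC : ∀ ω, |f ω| ≤ C) : Integrable f μ :=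
  (integrable_const C).mono' hf.aestronglyMeasurable (Filter.Eventually.of_forall hC)

lemma ams_integral_two_val {X : Ω → ℝ} (hm : Measurable X) (c : ℝ)
    (hv : ∀ ω, X ω = c ∨ X ω = -c) (hp : μ (X ⁻¹' {c}) = 1 / 2) :
    ∫ ω, X ω ∂μ = 0 := by
  have hA : MeasurableSet (X ⁻¹' {c}) := hm (measurableSet_singleton c)
  have hXeq : ∀ ω, X ω = (X ⁻¹' {c}).indicator (fun _ => 2 * c) ω + (-c) := by
    intro ω
    by_cases hω : ω ∈ X ⁻¹' {c}
    · have hx : X ω = c := hω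
      rw [Set.indicator_of_mem hω, hx]; ring
    · have hx : X ω = -c := by
        rcases hv ω with h1 | h1
        · exact absurd h1 hω
        · exact h1
      rw [Set.indicator_of_notMem hω, hx]; ring
  have hint : Integrable ((X ⁻¹' {c}).indicator (fun _ => 2 * c)) μ :=
    (integrable_const (2 * c)).indicator hA
  calc ∫ ω, X ω ∂μ
      = ∫ ω, ((X ⁻¹' {c}).indicator (fun _ => 2 * c) ω + (-c)) ∂μ := by
        exact integral_congr_ae (Filter.Eventually.of_forall hXeq)
    _ = (∫ ω, (X ⁻¹' {c}).indicator (fun _ => 2 * c) ω ∂μ) + ∫ _ω, (-c) ∂μ :=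
        integral_add hint (integrable_const _)
    _ = (μ (X ⁻¹' {c})).toReal * (2 * c) + (-c) := by
        rw [integral_indicator_const _ hA, integral_const, measureReal_def, measureReal_def, measure_univ,
          ENNReal.toReal_one, one_smul, smul_eq_mul]
    _ = 0 := by
        rw [hp, ENNReal.toReal_div, ENNReal.toReal_one, ENNReal.toReal_ofNat]
        ring

end AmsAux

/-- For an AMS sketch matrix `R ∈ ℝ^{b×n}` (rows are independent hash functions drawn from
a 4-wise independent family mapping `[n] → {−1/√b, +1/√b}`) and a fixed vector `h ∈ ℝⁿ`,
for every coordinate `i` we have `E[((RᵀRh)ᵢ)²] ≤ hᵢ² + ‖h‖₂²/b`. -/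
theorem ams_sketch_second_moment {Ω : Type*} [MeasurableSpace Ω] (μ : Measure Ω)
    [IsProbabilityMeasure μ] (b n : ℕ) (hb : 0 < b)
    (R : Ω → Fin b → Fin n → ℝ)
    (hmeas : ∀ i j, Measurable fun ω => R ω i j)
    -- entries take values in {−1/√b, +1/√b}
    (hval : ∀ ω i j, R ω i j = 1 / Real.sqrt b ∨ R ω i j = -(1 / Real.sqrt b))
    -- the `b` rows (hash functions) are independent
    (hrows : iIndepFun (fun i ω => R ω i) μ)
    -- each row is drawn from a 4-wise independent hash family: any at most 4 entries of a
    -- row are jointly uniform over {−1/√b, +1/√b}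
    (h4wise : ∀ (i : Fin b) (s : Finset (Fin n)), s.card ≤ 4 →
      ∀ ε : Fin n → ℝ, (∀ j ∈ s, ε j = 1 / Real.sqrt b ∨ ε j = -(1 / Real.sqrt b)) →
        μ {ω | ∀ j ∈ s, R ω i j = ε j} = (1 / 2 : ENNReal) ^ s.card)
    (h : Fin n → ℝ) :
    ∀ j : Fin n,
      ∫ ω, ((((Matrix.of (R ω))ᵀ * Matrix.of (R ω)) *ᵥ h) j) ^ 2 ∂μ ≤
        h j ^ 2 + (∑ l, h l ^ 2) / b := by
  intro j
  set c : ℝ := 1 / Real.sqrt b with hcdef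
  have hbR : (0 : ℝ) < b := by exact_mod_cast hb
  have hcpos : 0 < c := div_pos one_pos (Real.sqrt_pos.mpr hbR)
  have hc2 : c ^ 2 = 1 / b := by
    rw [hcdef, div_pow, one_pow, Real.sq_sqrt hbR.le]
  have hcc : c * c = 1 / b := by rw [← sq]; exact hc2
  -- pointwise facts
  have habs : ∀ ω i l, |R ω i l| = c := by
    intro ω i l
    rcases hval ω i l with h1 | h1 <;> rw [h1]
    · exact abs_of_pos hcpos
    · rw [abs_neg]; exact abs_of_pos hcpos
  have hsq : ∀ ω i l, R ω i l * R ω i l = 1 / b := by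
    intro ω i l
    rcases hval ω i l with h1 | h1 <;> rw [h1]
    · exact hcc
    · rw [neg_mul_neg]; exact hcc
  -- second moments within a row
  have hmom2 : ∀ (i : Fin b) (l l' : Fin n),
      ∫ ω, R ω i l * R ω i l' ∂μ = if l = l' then (1 : ℝ) / b else 0 := by
    intro i l l'
    by_cases hll : l = l'
    · subst hll
      simp only [if_pos rfl]
      rw [show (fun ω => R ω i l * R ω i l) = fun _ => (1 : ℝ) / b from funext fun ω => hsq ω i l]
      simp
    · rw [if_neg hll]
      apply ams_integral_two_val (X := fun ω => R ω i l * R ω i l') ((hmeas i l).mul (hmeas i l')) (c ^ 2)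
      · intro ω
        rcases hval ω i l with h1 | h1 <;> rcases hval ω i l' with h2 | h2 <;>
          rw [h1, h2] <;> [left; right; right; left] <;> ring
      · -- probability that the product is c^2
        have hcard : ({l, l'} : Finset (Fin n)).card = 2 := by
          rw [Finset.card_insert_of_notMem (by simpa using hll), Finset.card_singleton]
        have hA := h4wise i {l, l'} (by rw [hcard]; norm_num) (fun _ => c) (fun k _ => Or.inl rfl)
        have hB := h4wise i {l, l'} (by rw [hcard]; norm_num) (fun _ => -c)
          (fun k _ => Or.inr rfl)
        rw [hcard] at hA hB
        have hAset : {ω | ∀ k ∈ ({l, l'} : Finset (Fin n)), R ω i k = (fun _ => c) k}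
            = {ω | R ω i l = c ∧ R ω i l' = c} := by
          ext ω; simp [Finset.mem_insert]
        have hBset : {ω | ∀ k ∈ ({l, l'} : Finset (Fin n)), R ω i k = (fun _ => -c) k}
            = {ω | R ω i l = -c ∧ R ω i l' = -c} := by
          ext ω; simp [Finset.mem_insert]
        rw [hAset] at hA
        rw [hBset] at hB
        have hpre : (fun ω => R ω i l * R ω i l') ⁻¹' {c ^ 2}
            = {ω | R ω i l = c ∧ R ω i l' = c} ∪ {ω | R ω i l = -c ∧ R ω i l' = -c} := by
          ext ω
          simp only [Set.mem_preimage, Set.mem_singleton_iff, Set.mem_union, Set.mem_setOf_eq]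
          constructor
          · intro hprod
            rcases hval ω i l with h1 | h1 <;> rcases hval ω i l' with h2 | h2 <;>
              rw [h1, h2] at hprod
            · exact Or.inl ⟨h1, h2⟩
            · exfalso; nlinarith
            · exfalso; nlinarith
            · exact Or.inr ⟨h1, h2⟩
          · rintro (⟨h1, h2⟩ | ⟨h1, h2⟩) <;> rw [h1, h2] <;> ring
        have hAm : MeasurableSet {ω | R ω i l = c ∧ R ω i l' = c} :=
          ((hmeas i l) (measurableSet_singleton c)).inter
            ((hmeas i l') (measurableSet_singleton c))
        have hBm : MeasurableSet {ω | R ω i l = -c ∧ R ω i l' = -c} :=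
          ((hmeas i l) (measurableSet_singleton (-c))).inter
            ((hmeas i l') (measurableSet_singleton (-c)))
        have hdis : Disjoint {ω | R ω i l = c ∧ R ω i l' = c}
            {ω | R ω i l = -c ∧ R ω i l' = -c} := by
          rw [Set.disjoint_left]
          rintro ω ⟨h1, _⟩ ⟨h2, _⟩
          rw [h1] at h2
          linarith
        rw [hpre, measure_union hdis hBm, hA, hB]
        rw [show ((1 : ENNReal) / 2) ^ 2 = 1 / 4 by
          rw [one_div, ← ENNReal.inv_pow, one_div]; norm_num]
        rw [ENNReal.div_add_div_same]
        rw [show (1 + 1 : ENNReal) = 2 by norm_num]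
        rw [show (4 : ENNReal) = 2 * 2 by norm_num]
        rw [ENNReal.div_eq_div_iff] <;> norm_num
  -- the per-row sums
  set S : Fin b → Ω → ℝ := fun i => (fun v : Fin n → ℝ => ∑ l, v j * v l * h l) ∘ fun ω => R ω i
    with hSdef
  have hSapp : ∀ i ω, S i ω = ∑ l, R ω i j * R ω i l * h l := fun i ω => rfl
  have hSmeas : ∀ i, Measurable (S i) := by
    intro i
    apply Finset.measurable_sum
    intro l _
    exact ((hmeas i j).mul (hmeas i l)).mul measurable_const
  set C : ℝ := (1 / b) * ∑ l, |h l| with hCdef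
  have hCnn : 0 ≤ C := by positivity
  have hSbound : ∀ i ω, |S i ω| ≤ C := by
    intro i ω
    rw [hSapp]
    calc |∑ l, R ω i j * R ω i l * h l| ≤ ∑ l, |R ω i j * R ω i l * h l| :=
          Finset.abs_sum_le_sum_abs _ _
      _ = ∑ l, (1 / b) * |h l| := by
          apply Finset.sum_congr rfl
          intro l _
          rw [abs_mul, abs_mul, habs, habs, hcc]
      _ = C := by rw [hCdef, Finset.mul_sum]
  have hSint : ∀ i, Integrable (S i) μ := fun i =>
    ams_integrable_of_bounded (hSmeas i) C (hSbound i)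
  -- integrability of monomials R * R * a
  have hint2 : ∀ (i : Fin b) (l l' : Fin n) (a : ℝ),
      Integrable (fun ω => R ω i l * R ω i l' * a) μ := by
    intro i l l' a
    apply ams_integrable_of_bounded (f := fun ω => R ω i l * R ω i l' * a) (((hmeas i l).mul (hmeas i l')).mul measurable_const)
      ((1 / b) * |a|)
    intro ω
    rw [abs_mul, abs_mul, habs, habs, hcc]
  -- first moment of each S i
  have hES : ∀ i, ∫ ω, S i ω ∂μ = h j * (1 / b) := by
    intro i
    simp only [hSapp]
    rw [integral_finset_sum _ fun l _ => hint2 i j l (h l)]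
    have : ∀ l : Fin n, ∫ ω, R ω i j * R ω i l * h l ∂μ
        = (if j = l then (1 : ℝ) / b else 0) * h l := by
      intro l
      rw [integral_mul_const, hmom2]
    simp only [this, ite_mul, zero_mul, Finset.sum_ite_eq, Finset.mem_univ, if_pos]
    ring
  -- second moment of each S i
  have hES2 : ∀ i, ∫ ω, S i ω * S i ω ∂μ = (∑ l, h l ^ 2) / (b * b) := by
    intro i
    have hexp : ∀ ω, S i ω * S i ω
        = ∑ l, ∑ l', R ω i l * R ω i l' * ((1 / b) * (h l * h l')) := by
      intro ω
      rw [hSapp]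
      rw [Finset.sum_mul_sum]
      apply Finset.sum_congr rfl
      intro l _
      apply Finset.sum_congr rfl
      intro l' _
      have hjj := hsq ω i j
      calc R ω i j * R ω i l * h l * (R ω i j * R ω i l' * h l')
          = (R ω i j * R ω i j) * (R ω i l * R ω i l' * (h l * h l')) := by ring
        _ = R ω i l * R ω i l' * ((1 / b) * (h l * h l')) := by rw [hjj]; ring
    simp only [hexp]
    rw [integral_finset_sum _ fun l _ => integrable_finset_sum _ fun l' _ => hint2 i l l' _]
    have hinner : ∀ l : Fin n, ∫ ω, ∑ l', R ω i l * R ω i l' * ((1 / b) * (h l * h l')) ∂μ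
        = (1 / b) * ((1 / b) * (h l * h l)) := by
      intro l
      rw [integral_finset_sum _ fun l' _ => hint2 i l l' _]
      have : ∀ l' : Fin n, ∫ ω, R ω i l * R ω i l' * ((1 / b) * (h l * h l')) ∂μ
          = (if l = l' then (1 : ℝ) / b else 0) * ((1 / b) * (h l * h l')) := by
        intro l'
        rw [integral_mul_const, hmom2]
      simp only [this, ite_mul, zero_mul, Finset.sum_ite_eq, Finset.mem_univ, if_pos]
    simp only [hinner]
    rw [Finset.sum_div]
    apply Finset.sum_congr rfl
    intro l _
    have hbne : (b : ℝ) ≠ 0 := ne_of_gt hbR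
    field_simp
  -- independence across rows
  have hprod : ∀ i i', ∫ ω, S i ω * S i' ω ∂μ
      = if i = i' then (∑ l, h l ^ 2) / (b * b) else (h j * (1 / b)) * (h j * (1 / b)) := by
    intro i i'
    by_cases hii : i = i'
    · subst hii; rw [if_pos rfl]; exact hES2 i
    · rw [if_neg hii]
      have hf : Measurable fun v : Fin n → ℝ => ∑ l, v j * v l * h l :=
        Finset.measurable_sum _ fun l _ =>
          ((measurable_pi_apply j).mul (measurable_pi_apply l)).mul measurable_const
      have hIF : IndepFun (S i) (S i') μ := (hrows.indepFun hii).comp hf hf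
      have := hIF.integral_fun_mul_eq_mul_integral (hSint i).1 (hSint i').1
      rw [hES i, hES i'] at this
      simpa using this
  -- rewrite the target integrand
  have hvec : ∀ ω, (((Matrix.of (R ω))ᵀ * Matrix.of (R ω)) *ᵥ h) j = ∑ i, S i ω := by
    intro ω
    simp only [hSapp, Matrix.mulVec, Matrix.mul_apply, dotProduct, Matrix.transpose_apply,
      Matrix.of_apply, Finset.sum_mul]
    rw [Finset.sum_comm]
  have hrw : ∀ ω, (((Matrix.of (R ω))ᵀ * Matrix.of (R ω)) *ᵥ h) j ^ 2
      = ∑ i, ∑ i', S i ω * S i' ω := by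
    intro ω
    rw [hvec, sq, Finset.sum_mul_sum]
  have hprodint : ∀ (i i' : Fin b), Integrable (fun ω => S i ω * S i' ω) μ := by
    intro i i'
    apply ams_integrable_of_bounded (f := fun ω => S i ω * S i' ω) ((hSmeas i).mul (hSmeas i')) (C * C)
    intro ω
    rw [abs_mul]
    exact mul_le_mul (hSbound i ω) (hSbound i' ω) (abs_nonneg _) hCnn
  have hsplit : ∫ ω, ((((Matrix.of (R ω))ᵀ * Matrix.of (R ω)) *ᵥ h) j) ^ 2 ∂μ
      = ∑ i, ∑ i', ∫ ω, S i ω * S i' ω ∂μ := by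
    simp only [hrw]
    rw [integral_finset_sum _ fun i _ => integrable_finset_sum _ fun i' _ => hprodint i i']
    exact Finset.sum_congr rfl fun i _ =>
      integral_finset_sum _ fun i' _ => hprodint i i'
  rw [hsplit]
  simp only [hprod]
  set D : ℝ := (∑ l, h l ^ 2) / (b * b) with hD
  set O : ℝ := (h j * (1 / b)) * (h j * (1 / b)) with hO
  have hsum : ∑ i : Fin b, ∑ i' : Fin b, (if i = i' then D else O)
      = (b : ℝ) * ((b : ℝ) * O + (D - O)) := by
    have hinner : ∀ i : Fin b, ∑ i' : Fin b, (if i = i' then D else O)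
        = (b : ℝ) * O + (D - O) := by
      intro i
      have : ∀ i' : Fin b, (if i = i' then D else O) = O + (if i = i' then D - O else 0) := by
        intro i'; split <;> ring
      simp only [this, Finset.sum_add_distrib, Finset.sum_const, Finset.card_univ,
        Fintype.card_fin, Finset.sum_ite_eq, Finset.mem_univ, if_pos, nsmul_eq_mul]
    simp only [hinner, Finset.sum_const, Finset.card_univ, Fintype.card_fin, nsmul_eq_mul]
  rw [hsum]
  have hsnn : 0 ≤ ∑ l, h l ^ 2 := Finset.sum_nonneg fun l _ => sq_nonneg _
  have key : (b : ℝ) * ((b : ℝ) * O + (D - O))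
      = h j ^ 2 + (∑ l, h l ^ 2) / b - h j ^ 2 / b := by
    rw [hO, hD]
    field_simp
    ring
  rw [key]
  have : 0 ≤ h j ^ 2 / b := by positivity
  linarith
end

section
/- Let φ be a ν-self-concordant barrier on an open convex domain. Then for any x, y in dom φ, ⟨∇φ(x), y − x⟩ ≤ ν. -/
open Real

variable {n : ℕ}

/-- The Hessian quadratic form `u ↦ ∇²φ(x)[u,u]`. -/
noncomputable def hessQF (φ : EuclideanSpace ℝ (Fin n) → ℝ)
    (x u : EuclideanSpace ℝ (Fin n)) : ℝ :=
  iteratedFDeriv ℝ 2 φ x ![u, u]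

/-- The third-derivative cubic form `u ↦ ∇³φ(x)[u,u,u]`. -/
noncomputable def thirdCF (φ : EuclideanSpace ℝ (Fin n) → ℝ)
    (x u : EuclideanSpace ℝ (Fin n)) : ℝ :=
  iteratedFDeriv ℝ 3 φ x ![u, u, u]

lemma inner_gradient_eq_fderiv (φ : EuclideanSpace ℝ (Fin n) → ℝ)
    (z u : EuclideanSpace ℝ (Fin n)) :
    (inner ℝ (gradient φ z) u : ℝ) = fderiv ℝ φ z u := by
  rw [gradient, InnerProductSpace.toDual_symm_apply]

/-- If `φ` is a `ν`-self-concordant barrier on an open convex domain `K`, then for all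
`x, y ∈ K`, `⟨∇φ(x), y − x⟩ ≤ ν`. -/
theorem barrier_grad_inner_le_nu
    (K : Set (EuclideanSpace ℝ (Fin n))) (hK : IsOpen K) (hconv : Convex ℝ K)
    (φ : EuclideanSpace ℝ (Fin n) → ℝ) (hsmooth : ContDiffOn ℝ 3 φ K)
    (ν : ℝ) (hν : 1 ≤ ν)
    (hconvex : ConvexOn ℝ K φ)
    (hsc : ∀ x ∈ K, ∀ u, |thirdCF φ x u| ≤ 2 * (hessQF φ x u) ^ ((3 : ℝ) / 2))
    (hbarrier : ∀ x ∈ K, ∀ u,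
      (inner ℝ (gradient φ x) u : ℝ) ^ 2 ≤ ν * hessQF φ x u) :
    ∀ x ∈ K, ∀ y ∈ K, (inner ℝ (gradient φ x) (y - x) : ℝ) ≤ ν := by
  intro x hx y hy
  have hν0 : (0:ℝ) < ν := lt_of_lt_of_le one_pos hν
  set u : EuclideanSpace ℝ (Fin n) := y - x with hu
  set γ : ℝ → EuclideanSpace ℝ (Fin n) := fun t => x + t • u with hγ
  have hγK : ∀ t ∈ Set.Icc (0:ℝ) 1, γ t ∈ K := by
    intro t ht
    have h := hconv hx hy (by linarith [ht.2] : (0:ℝ) ≤ 1 - t) ht.1 (by ring)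
    have : γ t = (1 - t) • x + t • y := by
      simp only [hγ, hu]
      module
    rw [this]; exact h
  set f : ℝ → ℝ := fun t => fderiv ℝ φ (γ t) u with hf
  -- derivative of f
  have hderiv : ∀ t : ℝ, γ t ∈ K → HasDerivAt f (hessQF φ (γ t) u) t := by
    intro t htK
    have hca : ContDiffAt ℝ 3 φ (γ t) := hsmooth.contDiffAt (hK.mem_nhds htK)
    have hca2 : ContDiffAt ℝ 2 (fderiv ℝ φ) (γ t) :=
      hca.fderiv_right (by norm_num)
    have hdiff2 : DifferentiableAt ℝ (fderiv ℝ φ) (γ t) :=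
      hca2.differentiableAt (by norm_num)
    have hγ' : HasDerivAt γ u t := by
      simpa [hγ] using ((hasDerivAt_id t).smul_const u).const_add x
    have hF : HasFDerivAt (fun z => fderiv ℝ φ z u)
        ((ContinuousLinearMap.apply ℝ ℝ u).comp
          (fderiv ℝ (fderiv ℝ φ) (γ t))) (γ t) :=
      (ContinuousLinearMap.apply ℝ ℝ u).hasFDerivAt.comp (γ t) hdiff2.hasFDerivAt
    have := hF.comp_hasDerivAt t hγ'
    have heq : hessQF φ (γ t) u
        = ((ContinuousLinearMap.apply ℝ ℝ u).comp (fderiv ℝ (fderiv ℝ φ) (γ t))) u := by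
      rw [hessQF, iteratedFDeriv_two_apply]
      simp
    rw [heq]
    exact this
  -- hessian nonneg on K
  have hhess : ∀ z ∈ K, 0 ≤ hessQF φ z u := by
    intro z hz
    have h := hbarrier z hz u
    nlinarith [sq_nonneg (inner ℝ (gradient φ z) u : ℝ)]
  -- key identity: f t equals the inner product with the gradient
  have hfg : ∀ t, f t = (inner ℝ (gradient φ (γ t)) u : ℝ) := fun t =>
    (inner_gradient_eq_fderiv φ (γ t) u).symm
  have hf0 : (inner ℝ (gradient φ x) (y - x) : ℝ) = f 0 := by
    rw [hfg]
    simp [hγ, hu]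
  rw [hf0]
  by_contra hlt
  push_neg at hlt
  -- f is monotone on [0,1]
  have hcont : ContinuousOn f (Set.Icc 0 1) := fun t ht =>
    ((hderiv t (hγK t ht)).continuousAt).continuousWithinAt
  have hmono : MonotoneOn f (Set.Icc 0 1) := by
    apply monotoneOn_of_deriv_nonneg (convex_Icc 0 1) hcont
    · intro t ht
      rw [interior_Icc] at ht
      exact ((hderiv t (hγK t ⟨le_of_lt ht.1, le_of_lt ht.2⟩)).differentiableAt).differentiableWithinAt
    · intro t ht
      rw [interior_Icc] at ht
      have htK := hγK t ⟨le_of_lt ht.1, le_of_lt ht.2⟩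
      rw [(hderiv t htK).deriv]
      exact hhess _ htK
  have hfpos : ∀ t ∈ Set.Icc (0:ℝ) 1, ν < f t := fun t ht =>
    lt_of_lt_of_le hlt (hmono (Set.left_mem_Icc.mpr one_pos.le) ht ht.1)
  -- the auxiliary function g
  set g : ℝ → ℝ := fun t => -(f t)⁻¹ - t * ν⁻¹ with hg
  have hgderiv : ∀ t ∈ Set.Icc (0:ℝ) 1,
      HasDerivAt g (hessQF φ (γ t) u / (f t) ^ 2 - ν⁻¹) t := by
    intro t ht
    have hft : (0:ℝ) < f t := lt_trans hν0 (hfpos t ht)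
    have h1 := (((hderiv t (hγK t ht)).inv hft.ne').neg).sub
      ((hasDerivAt_id t).mul_const ν⁻¹)
    exact h1.congr_deriv (by ring)
  have hgmono : MonotoneOn g (Set.Icc 0 1) := by
    apply monotoneOn_of_deriv_nonneg (convex_Icc 0 1)
    · intro t ht
      exact ((hgderiv t ht).continuousAt).continuousWithinAt
    · intro t ht
      rw [interior_Icc] at ht
      exact ((hgderiv t ⟨le_of_lt ht.1, le_of_lt ht.2⟩).differentiableAt).differentiableWithinAt
    · intro t ht
      rw [interior_Icc] at ht
      have ht' : t ∈ Set.Icc (0:ℝ) 1 := ⟨le_of_lt ht.1, le_of_lt ht.2⟩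
      rw [(hgderiv t ht').deriv]
      have hft : (0:ℝ) < f t := lt_trans hν0 (hfpos t ht')
      have hb := hbarrier (γ t) (hγK t ht') u
      rw [← hfg t] at hb
      have : ν⁻¹ ≤ hessQF φ (γ t) u / (f t) ^ 2 := by
        rw [inv_eq_one_div, div_le_div_iff₀ hν0 (pow_pos hft 2)]
        nlinarith
      linarith
  have h01 : g 0 ≤ g 1 := hgmono (Set.left_mem_Icc.mpr one_pos.le)
    (Set.right_mem_Icc.mpr one_pos.le) one_pos.le
  have hf0pos : (0:ℝ) < f 0 := lt_trans hν0 (hfpos 0 (Set.left_mem_Icc.mpr one_pos.le))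
  have hf1pos : (0:ℝ) < f 1 := lt_trans hν0 (hfpos 1 (Set.right_mem_Icc.mpr one_pos.le))
  have hinv0 : (f 0)⁻¹ < ν⁻¹ := by
    apply inv_strictAnti₀ hν0
    exact hfpos 0 (Set.left_mem_Icc.mpr one_pos.le)
  have hinv1 : (0:ℝ) < (f 1)⁻¹ := inv_pos.mpr hf1pos
  simp only [hg] at h01
  -- g 0 = -(f 0)⁻¹ > -ν⁻¹, g 1 = -(f 1)⁻¹ - ν⁻¹ < -ν⁻¹
  nlinarith
end

section
/- Let V ∈ ℝ^{n×n} be symmetric positive definite, H ∈ ℝ^{n×n} symmetric positive definite with (1−α)H⁻¹ ⪯ V ⪯ (1+α)H⁻¹ for α ≤ 1/10000, let P̃ be any matrix such that I − P̃ is an orthogonal projection, and let h ∈ ℝⁿ. Then hᵀV^{1/2}(I−P̃)V^{1/2} H V^{1/2}(I−P̃)V^{1/2}h ≤ 2·hᵀVh. -/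
open Matrix

open scoped ComplexOrder

/-- The positive semidefinite square root of a positive semidefinite matrix
(the definition `Matrix.PosSemidef.sqrt` of the older Mathlib, since removed). -/
noncomputable def Matrix.PosSemidef.sqrt {n 𝕜 : Type*} [Fintype n] [DecidableEq n] [RCLike 𝕜]
    {A : Matrix n n 𝕜} (hA : A.PosSemidef) : Matrix n n 𝕜 :=
  hA.1.eigenvectorUnitary.1 * diagonal ((↑) ∘ (√·) ∘ hA.1.eigenvalues) *
    (star hA.1.eigenvectorUnitary : Matrix n n 𝕜)

private lemma sqrt_herm {n 𝕜 : Type*} [Fintype n] [DecidableEq n] [RCLike 𝕜]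
    {A : Matrix n n 𝕜} (hA : A.PosSemidef) : hA.sqrt.IsHermitian := by
  unfold Matrix.PosSemidef.sqrt
  rw [star_eq_conjTranspose]
  apply isHermitian_mul_mul_conjTranspose
  apply isHermitian_diagonal_of_self_adjoint
  ext i
  simp

private lemma Matrix.PosSemidef.sqrt_mul_self {n 𝕜 : Type*} [Fintype n] [DecidableEq n]
    [RCLike 𝕜] {A : Matrix n n 𝕜} (hA : A.PosSemidef) : hA.sqrt * hA.sqrt = A := by
  unfold Matrix.PosSemidef.sqrt
  have hU := Unitary.coe_star_mul_self hA.1.eigenvectorUnitary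
  have hD : diagonal ((↑) ∘ (√·) ∘ hA.1.eigenvalues) * diagonal ((↑) ∘ (√·) ∘ hA.1.eigenvalues)
      = diagonal (RCLike.ofReal ∘ hA.1.eigenvalues : n → 𝕜) := by
    rw [diagonal_mul_diagonal]
    congr 1
    funext i
    simp only [Function.comp_apply]
    rw [← RCLike.ofReal_mul, Real.mul_self_sqrt (hA.eigenvalues_nonneg i)]
  conv_rhs => rw [hA.1.spectral_theorem, Unitary.conjStarAlgAut_apply, ← hD]
  simp only [Matrix.mul_assoc]
  rw [← Matrix.mul_assoc (star _ : Matrix n n 𝕜) _ _, hU, Matrix.one_mul]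

private lemma dot_tr {n : ℕ} (A : Matrix (Fin n) (Fin n) ℝ) (x y : Fin n → ℝ) :
    x ⬝ᵥ (Aᵀ *ᵥ y) = (A *ᵥ x) ⬝ᵥ y := by
  rw [Matrix.dotProduct_mulVec, Matrix.vecMul_transpose]

private lemma dot_self_nonneg {n : ℕ} (x : Fin n → ℝ) : 0 ≤ x ⬝ᵥ x :=
  Finset.sum_nonneg fun i _ => mul_self_nonneg _

private lemma dot_cs {n : ℕ} (x y : Fin n → ℝ) :
    (x ⬝ᵥ y) ^ 2 ≤ (x ⬝ᵥ x) * (y ⬝ᵥ y) := by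
  simpa [dotProduct, sq] using Finset.sum_mul_sq_le_sq_mul_sq Finset.univ x y

/-- If `V, H` are symmetric positive definite with `(1−α)H⁻¹ ⪯ V ⪯ (1+α)H⁻¹` for
`0 ≤ α ≤ 1/10000`, and `I − P̃` is an orthogonal projection, then
`hᵀ V^{1/2}(I−P̃)V^{1/2} H V^{1/2}(I−P̃)V^{1/2} h ≤ 2 hᵀ V h`. -/
theorem projected_quadratic_form_le (n : ℕ)
    (V H : Matrix (Fin n) (Fin n) ℝ) (hV : V.PosDef) (hH : H.PosDef)
    (α : ℝ) (hα : 0 ≤ α ∧ α ≤ 1 / 10000)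
    (hlow : (V - (1 - α) • H⁻¹).PosSemidef)
    (hhigh : ((1 + α) • H⁻¹ - V).PosSemidef)
    (P : Matrix (Fin n) (Fin n) ℝ)
    (hPsymm : (1 - P).IsHermitian) (hPidem : (1 - P) * (1 - P) = 1 - P)
    (h : Fin n → ℝ) :
    h ⬝ᵥ (hV.posSemidef.sqrt * (1 - P) * hV.posSemidef.sqrt * H *
        hV.posSemidef.sqrt * (1 - P) * hV.posSemidef.sqrt) *ᵥ h ≤
      2 * (h ⬝ᵥ V *ᵥ h) := by
  obtain ⟨hα0, hα1⟩ := hα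
  set S := hV.posSemidef.sqrt with hSdef
  set T := hH.posSemidef.sqrt with hTdef
  set Q := (1 : Matrix (Fin n) (Fin n) ℝ) - P with hQdef
  have hSsym : Sᵀ = S := by
    have := sqrt_herm hV.posSemidef
    simpa [Matrix.IsHermitian, Matrix.conjTranspose_eq_transpose_of_trivial] using this
  have hTsym : Tᵀ = T := by
    have := sqrt_herm hH.posSemidef
    simpa [Matrix.IsHermitian, Matrix.conjTranspose_eq_transpose_of_trivial] using this
  have hQsym : Qᵀ = Q := by
    have := hPsymm
    simpa [Matrix.IsHermitian, Matrix.conjTranspose_eq_transpose_of_trivial] using this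
  have hSmul : S * S = V := hV.posSemidef.sqrt_mul_self
  have hTmul : T * T = H := hH.posSemidef.sqrt_mul_self
  -- T is invertible
  have hdetH : H.det ≠ 0 := ne_of_gt hH.det_pos
  have hdetT : T.det ≠ 0 := by
    intro h0
    apply hdetH
    rw [← hTmul, Matrix.det_mul, h0, zero_mul]
  have hTu : IsUnit T.det := isUnit_iff_ne_zero.mpr hdetT
  have hTinv : T * T⁻¹ = 1 := Matrix.mul_nonsing_inv T hTu
  have hTinv' : T⁻¹ * T = 1 := Matrix.nonsing_inv_mul T hTu
  have hTHinvT : T * H⁻¹ * T = 1 := by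
    rw [← hTmul, Matrix.mul_inv_rev]
    calc T * (T⁻¹ * T⁻¹) * T = (T * T⁻¹) * (T⁻¹ * T) := by simp only [Matrix.mul_assoc]
      _ = 1 := by rw [hTinv, hTinv', Matrix.one_mul]
  -- (1+α)•1 - T*V*T is PSD
  have hconj : ((1 + α) • (1 : Matrix (Fin n) (Fin n) ℝ) - T * V * T).PosSemidef := by
    have h1 := hhigh.mul_mul_conjTranspose_same T
    have e : T * ((1 + α) • H⁻¹ - V) * Tᴴ
        = (1 + α) • (1 : Matrix (Fin n) (Fin n) ℝ) - T * V * T := by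
      rw [Matrix.conjTranspose_eq_transpose_of_trivial, hTsym, Matrix.mul_sub, Matrix.sub_mul,
        Matrix.mul_smul, Matrix.smul_mul, hTHinvT]
    rwa [e] at h1
  have hTVT : ∀ u : Fin n → ℝ, u ⬝ᵥ ((T * V * T) *ᵥ u) ≤ (1 + α) * (u ⬝ᵥ u) := by
    intro u
    have h0 := hconj.dotProduct_mulVec_nonneg u
    simp only [star_trivial, Matrix.sub_mulVec, Matrix.smul_mulVec, Matrix.one_mulVec,
      dotProduct_sub, dotProduct_smul, smul_eq_mul] at h0
    linarith
  set v : Fin n → ℝ := S *ᵥ h with hv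
  set y : Fin n → ℝ := Q *ᵥ v with hy
  set u : Fin n → ℝ := (T * S * Q * S) *ᵥ h with hu
  -- LHS = u ⬝ᵥ u
  have hBt : (T * S * Q * S)ᵀ = S * Q * S * T := by
    simp only [Matrix.transpose_mul, hSsym, hTsym, hQsym, Matrix.mul_assoc]
  have hLHS : h ⬝ᵥ (S * Q * S * H * S * Q * S) *ᵥ h = u ⬝ᵥ u := by
    have e : S * Q * S * H * S * Q * S = (T * S * Q * S)ᵀ * (T * S * Q * S) := by
      rw [hBt, ← hTmul]
      simp only [Matrix.mul_assoc]
    rw [e, ← Matrix.mulVec_mulVec, dot_tr, hu]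
  -- u = (T*S) *ᵥ y
  have huy : u = (T * S) *ᵥ y := by
    rw [hu, hy, hv]
    simp only [Matrix.mulVec_mulVec, Matrix.mul_assoc]
  -- key: (u⬝u)^2 ≤ (y⬝y) * ((1+α) * (u⬝u))
  have hTSt : (T * S)ᵀ = S * T := by simp [Matrix.transpose_mul, hSsym, hTsym]
  have hAAt : (T * S) * (T * S)ᵀ = T * V * T := by
    rw [hTSt, ← hSmul]
    simp only [Matrix.mul_assoc]
  have hkey : (u ⬝ᵥ u) ^ 2 ≤ (y ⬝ᵥ y) * ((1 + α) * (u ⬝ᵥ u)) := by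
    have e1 : u ⬝ᵥ u = y ⬝ᵥ ((T * S)ᵀ *ᵥ u) := by
      rw [dot_tr, ← huy]
    have e2 : ((T * S)ᵀ *ᵥ u) ⬝ᵥ ((T * S)ᵀ *ᵥ u) = u ⬝ᵥ ((T * V * T) *ᵥ u) := by
      rw [dot_tr, Matrix.mulVec_mulVec, hAAt, dotProduct_comm]
    calc (u ⬝ᵥ u) ^ 2 = (y ⬝ᵥ ((T * S)ᵀ *ᵥ u)) ^ 2 := by rw [e1]
      _ ≤ (y ⬝ᵥ y) * (((T * S)ᵀ *ᵥ u) ⬝ᵥ ((T * S)ᵀ *ᵥ u)) := dot_cs _ _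
      _ = (y ⬝ᵥ y) * (u ⬝ᵥ ((T * V * T) *ᵥ u)) := by rw [e2]
      _ ≤ (y ⬝ᵥ y) * ((1 + α) * (u ⬝ᵥ u)) := by
          exact mul_le_mul_of_nonneg_left (hTVT u) (dot_self_nonneg y)
  -- y⬝y ≤ v⬝v
  have hvy : v ⬝ᵥ y = y ⬝ᵥ y := by
    have e1 : y ⬝ᵥ y = v ⬝ᵥ (Q *ᵥ y) := by
      conv_lhs => rw [hy]
      rw [← dot_tr, hQsym]
    rw [e1, hy, hv]
    simp only [Matrix.mulVec_mulVec, ← Matrix.mul_assoc, hPidem]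
  have hyv : y ⬝ᵥ y ≤ v ⬝ᵥ v := by
    have hw := dot_self_nonneg (v - y)
    have e : (v - y) ⬝ᵥ (v - y) = v ⬝ᵥ v - 2 * (v ⬝ᵥ y) + y ⬝ᵥ y := by
      simp only [dotProduct_sub, sub_dotProduct]
      rw [dotProduct_comm y v]
      ring
    rw [e, hvy] at hw
    linarith
  -- v⬝v = h⬝Vh
  have hvV : v ⬝ᵥ v = h ⬝ᵥ V *ᵥ h := by
    conv_lhs => rw [hv]
    rw [← dot_tr, hSsym, Matrix.mulVec_mulVec, hSmul, dotProduct_comm]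
  have hVnn : 0 ≤ h ⬝ᵥ V *ᵥ h := hvV ▸ dot_self_nonneg v
  have hunn : 0 ≤ u ⬝ᵥ u := dot_self_nonneg u
  have hyy : y ⬝ᵥ y ≤ h ⬝ᵥ V *ᵥ h := hvV ▸ hyv
  have hfin : u ⬝ᵥ u ≤ (1 + α) * (h ⬝ᵥ V *ᵥ h) := by
    rcases eq_or_lt_of_le hunn with h0 | h0
    · rw [← h0]
      positivity
    · have h1 : u ⬝ᵥ u ≤ (1 + α) * (y ⬝ᵥ y) := by
        have := hkey
        nlinarith
      calc u ⬝ᵥ u ≤ (1 + α) * (y ⬝ᵥ y) := h1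
        _ ≤ (1 + α) * (h ⬝ᵥ V *ᵥ h) := by
            apply mul_le_mul_of_nonneg_left hyy
            linarith
  rw [hLHS]
  calc u ⬝ᵥ u ≤ (1 + α) * (h ⬝ᵥ V *ᵥ h) := hfin
    _ ≤ 2 * (h ⬝ᵥ V *ᵥ h) := by nlinarith
end
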